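/- Let n ≥ 1 and let B ∈ ℝ^{n×n} be a matrix whose characteristic polynomial splits over ℝ, all of whose eigenvalues are nonzero, which is cyclic (its minimal polynomial equals its characteristic polynomial), and every root of whose minimal polynomial has multiplicity at most two in the minimal polynomial. Let m be the number of distinct eigenvalues of B. Then there exist 2m+3 nonzero, real, and pairwise distinct numbers u(0), u(1), …, u(2m+1), u(2m+2) such that (I + u(2m+2)B)(I + u(2m+1)B)⋯(I + u(1)B)(I + u(0)B) = I. -/

import Mathlib

open Matrix MeasureTheory Polynomial

/-- The product `(I + u(l-1)B) ⋯ (I + u(1)B)(I + u(0)B)`. -/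
noncomputable def prodCtrl {n : ℕ} (B : Matrix (Fin n) (Fin n) ℝ) (l : ℕ) (u : ℕ → ℝ) :
    Matrix (Fin n) (Fin n) ℝ :=
  ((List.range l).reverse.map fun k => (1 : Matrix (Fin n) (Fin n) ℝ) + u k • B).prod

/-- `ξ` can be steered to `η` in the system `x(k+1) = (I + u(k)B) x(k)`. -/
noncomputable def steers {n : ℕ} (B : Matrix (Fin n) (Fin n) ℝ) (ξ η : Fin n → ℝ) : Prop :=
  ∃ l : ℕ, 1 ≤ l ∧ ∃ u : ℕ → ℝ, (prodCtrl B l u).mulVec ξ = η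

/-- Near-controllability: outside two Lebesgue-null sets, any state can be steered to any state. -/
noncomputable def nearlyControllable {n : ℕ} (B : Matrix (Fin n) (Fin n) ℝ) : Prop :=
  ∃ E F : Set (Fin n → ℝ), volume E = 0 ∧ volume F = 0 ∧
    ∀ ξ ∉ E, ∀ η ∉ F, steers B ξ η

/-- The matrix `[ξ, Bξ, B²ξ, …, B^{n-1}ξ]`. -/
noncomputable def ctrlMat {n : ℕ} (B : Matrix (Fin n) (Fin n) ℝ) (ξ : Fin n → ℝ) :
    Matrix (Fin n) (Fin n) ℝ :=
  Matrix.of fun i j => (B ^ (j : ℕ)).mulVec ξ i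

/-- The `N × N` Jordan block with eigenvalue `lam`. -/
def jordanBlock (N : ℕ) (lam : ℝ) : Matrix (Fin N) (Fin N) ℝ :=
  Matrix.of fun i j => if i = j then lam else if (j : ℕ) = (i : ℕ) + 1 then 1 else 0

/-- Block-diagonal Jordan matrix: `r` two-dimensional Jordan blocks with eigenvalues
`lam 0, …, lam (r-1)` followed by `1 × 1` blocks `lam r, …, lam (m-1)` (so `n = m + r`). -/
def pairJordan (n r : ℕ) (lam : ℕ → ℝ) : Matrix (Fin n) (Fin n) ℝ :=
  Matrix.of fun i j =>
    if (i : ℕ) = (j : ℕ) then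
      (if (i : ℕ) < 2 * r then lam ((i : ℕ) / 2) else lam ((i : ℕ) - r))
    else if (j : ℕ) = (i : ℕ) + 1 ∧ (i : ℕ) < 2 * r ∧ (i : ℕ) % 2 = 0 then 1 else 0

/-! ### Auxiliary machinery for `stmt1` -/

/-- Alternating pair structure: `x₀ < s₁ < y₁ < s₂ < y₂ < ⋯ < e`, with `0 ≤ H sᵢ` and
`H yᵢ < 0`. -/
def altPairs (H : ℝ → ℝ) : ℝ → List (ℝ × ℝ) → ℝ → Prop
  | x₀, [], e => x₀ < e
  | x₀, (s, y) :: rest, e => x₀ < s ∧ s < y ∧ 0 ≤ H s ∧ H y < 0 ∧ altPairs H y rest e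

theorem altPairs_lt {H : ℝ → ℝ} : ∀ {ps : List (ℝ × ℝ)} {x e : ℝ}, altPairs H x ps e → x < e
  | [], _, _, h => h
  | (s, y) :: rest, _, _, h => by
    obtain ⟨h1, h2, _, _, h5⟩ := h
    exact h1.trans (h2.trans (altPairs_lt h5))

theorem altPairs_of_lt {H : ℝ → ℝ} {ps : List (ℝ × ℝ)} {x x' e : ℝ} (hx : x' < x)
    (h : altPairs H x ps e) : altPairs H x' ps e := by
  cases ps with
  | nil => exact hx.trans h
  | cons p rest =>
    obtain ⟨s, y⟩ := p
    obtain ⟨h1, h⟩ := h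
    exact ⟨hx.trans h1, h⟩

theorem altPairs_append {H : ℝ → ℝ} : ∀ {ps ps' : List (ℝ × ℝ)} {x e e' : ℝ},
    altPairs H x ps e → altPairs H e ps' e' → altPairs H x (ps ++ ps') e'
  | [], ps', x, e, e', h, h' => by simpa using altPairs_of_lt h h'
  | (s, y) :: rest, ps', x, e, e', h, h' => by
    obtain ⟨h1, h2, h3, h4, h5⟩ := h
    exact ⟨h1, h2, h3, h4, altPairs_append h5 h'⟩

theorem altPairs_mono_right {H : ℝ → ℝ} : ∀ {ps : List (ℝ × ℝ)} {x e e' : ℝ},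
    altPairs H x ps e → e ≤ e' → altPairs H x ps e'
  | [], x, e, e', h, he => lt_of_lt_of_le h he
  | (s, y) :: rest, x, e, e', h, he => by
    obtain ⟨h1, h2, h3, h4, h5⟩ := h
    exact ⟨h1, h2, h3, h4, altPairs_mono_right h5 he⟩

theorem altPairs_snd_neg {H : ℝ → ℝ} : ∀ {ps : List (ℝ × ℝ)} {x e : ℝ},
    altPairs H x ps e → ∀ p ∈ ps, H p.2 < 0
  | [], _, _, _, p, hp => absurd hp List.not_mem_nil
  | (s, y) :: rest, x, e, h, p, hp => by
    obtain ⟨h1, h2, h3, h4, h5⟩ := h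
    rcases List.mem_cons.mp hp with rfl | hp
    · exact h4
    · exact altPairs_snd_neg h5 p hp

theorem altPairs_fst_nonneg {H : ℝ → ℝ} : ∀ {ps : List (ℝ × ℝ)} {x e : ℝ},
    altPairs H x ps e → ∀ p ∈ ps, 0 ≤ H p.1
  | [], _, _, _, p, hp => absurd hp List.not_mem_nil
  | (s, y) :: rest, x, e, h, p, hp => by
    obtain ⟨h1, h2, h3, h4, h5⟩ := h
    rcases List.mem_cons.mp hp with rfl | hp
    · exact h3
    · exact altPairs_fst_nonneg h5 p hp

/-- Root extraction from an alternating chain of sign conditions. -/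
theorem ext_roots {H f : ℝ → ℝ} (hf : Continuous f) :
    ∀ (ps : List (ℝ × ℝ)) (x₀ e : ℝ), altPairs H x₀ ps e →
      f x₀ < 0 → 0 < f e → (∀ p ∈ ps, 0 < f p.1 ∧ f p.2 < 0) →
      ∃ R : Finset ℝ, (∀ r ∈ R, r ∈ Set.Ioo x₀ e ∧ f r = 0) ∧ R.card = 2 * ps.length + 1
  | [], x₀, e, hap, hx₀, he, _ => by
    have hlt : x₀ < e := altPairs_lt hap
    have h0 : (0 : ℝ) ∈ Set.Ioo (f x₀) (f e) := ⟨hx₀, he⟩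
    obtain ⟨r, hr, hfr⟩ := intermediate_value_Ioo hlt.le hf.continuousOn h0
    refine ⟨{r}, ?_, by simp⟩
    intro r' hr'
    rw [Finset.mem_singleton] at hr'
    subst hr'
    exact ⟨hr, hfr⟩
  | (s, y) :: rest, x₀, e, hap, hx₀, he, hsigns => by
    obtain ⟨h1, h2, _, _, h5⟩ := hap
    obtain ⟨hfs, hfy⟩ := hsigns (s, y) List.mem_cons_self
    obtain ⟨r₁, hr₁, hfr₁⟩ := intermediate_value_Ioo h1.le hf.continuousOn
      (⟨hx₀, hfs⟩ : (0:ℝ) ∈ Set.Ioo (f x₀) (f s))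
    obtain ⟨r₂, hr₂, hfr₂⟩ := intermediate_value_Ioo' h2.le hf.continuousOn
      (⟨hfy, hfs⟩ : (0:ℝ) ∈ Set.Ioo (f y) (f s))
    obtain ⟨R, hR, hRcard⟩ := ext_roots hf rest y e h5 hfy he
      (fun p hp => hsigns p (List.mem_cons_of_mem _ hp))
    have hye : y < e := altPairs_lt h5
    refine ⟨insert r₁ (insert r₂ R), ?_, ?_⟩
    · intro r hr
      rcases Finset.mem_insert.mp hr with rfl | hr
      · exact ⟨⟨hr₁.1, hr₁.2.trans (h2.trans hye)⟩, hfr₁⟩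
      rcases Finset.mem_insert.mp hr with rfl | hr
      · exact ⟨⟨h1.trans hr₂.1, hr₂.2.trans hye⟩, hfr₂⟩
      · exact ⟨⟨h1.trans (h2.trans (hR r hr).1.1), (hR r hr).1.2⟩, (hR r hr).2⟩
    · have hr₂R : r₂ ∉ R := fun h => absurd (hR r₂ h).1.1 (not_lt.mpr hr₂.2.le)
      have hr₁R : r₁ ∉ insert r₂ R := by
        intro h
        rcases Finset.mem_insert.mp h with rfl | h
        · exact absurd hr₂.1 (not_lt.mpr hr₁.2.le)
        · exact absurd (hR r₁ h).1.1 (not_lt.mpr (hr₁.2.trans h2).le)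
      rw [Finset.card_insert_of_notMem hr₁R, Finset.card_insert_of_notMem hr₂R, hRcard]
      simp [List.length_cons]
      ring

/-- Construction of the alternating test-point chain over a finset of "plus" points. -/
theorem pts {H : ℝ → ℝ} {hi : ℝ} :
    ∀ (N : ℕ) (S : Finset ℝ) (lo : ℝ), S.card = N → lo < hi →
      (∀ α β : ℝ, lo ≤ α → α < β → β ≤ hi → ∃ x ∈ Set.Ioo α β, H x < 0) →
      (∀ s ∈ S, s ∈ Set.Ioo lo hi) → (∀ s ∈ S, 0 ≤ H s) →
      ∃ (x₀ : ℝ) (ps : List (ℝ × ℝ)), x₀ ∈ Set.Ioo lo hi ∧ H x₀ < 0 ∧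
        ps.length = S.card ∧ altPairs H x₀ ps hi := by
  intro N
  induction N with
  | zero =>
    intro S lo hcard hlh hneg _ _
    obtain ⟨x₀, hx₀, hHx₀⟩ := hneg lo hi le_rfl hlh le_rfl
    exact ⟨x₀, [], hx₀, hHx₀, by simp [hcard], hx₀.2⟩
  | succ N ih =>
    intro S lo hcard hlh hneg hS hS0
    have hne : S.Nonempty := Finset.card_pos.mp (by omega)
    set s := S.min' hne with hs
    have hsS : s ∈ S := S.min'_mem hne
    have hs_mem := hS s hsS
    obtain ⟨x₀', ps', hx₀', hHx₀', hlen', hap'⟩ := ih (S.erase s) s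
      (by rw [Finset.card_erase_of_mem hsS, hcard]; omega)
      hs_mem.2
      (fun α β hα hαβ hβ => hneg α β (hs_mem.1.le.trans hα) hαβ hβ)
      (fun t ht => ⟨lt_of_le_of_ne (S.min'_le t (Finset.mem_of_mem_erase ht))
        (Ne.symm (Finset.ne_of_mem_erase ht)), (hS t (Finset.mem_of_mem_erase ht)).2⟩)
      (fun t ht => hS0 t (Finset.mem_of_mem_erase ht))
    obtain ⟨x₀, hx₀, hHx₀⟩ := hneg lo s le_rfl hs_mem.1 hs_mem.2.le
    refine ⟨x₀, (s, x₀') :: ps', ⟨hx₀.1, hx₀.2.trans hs_mem.2⟩, hHx₀, ?_, ?_⟩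
    · simp [hlen', Finset.card_erase_of_mem hsS, hcard]
    · exact ⟨hx₀.2, hx₀'.1, hS0 s hsS, hHx₀', hap'⟩

theorem le_foldr_max : ∀ (l : List ℝ) (x : ℝ), x ∈ l → x ≤ l.foldr max 0
  | [], x, hx => absurd hx List.not_mem_nil
  | a :: l, x, hx => by
    rcases List.mem_cons.mp hx with rfl | hx
    · exact le_max_left _ _
    · exact (le_foldr_max l x hx).trans (le_max_right _ _)

theorem foldr_max_nonneg : ∀ l : List ℝ, 0 ≤ l.foldr max 0
  | [] => le_refl 0
  | _ :: l => (foldr_max_nonneg l).trans (le_max_right _ _)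

theorem exists_nonroot_Ioo {p : ℝ[X]} (hp : p ≠ 0) {α β : ℝ} (h : α < β) :
    ∃ x ∈ Set.Ioo α β, p.eval x ≠ 0 := by
  have h1 : (Set.Ioo α β).Infinite := Set.Ioo_infinite h
  have h2 := h1.diff (p.finite_setOf_isRoot hp)
  obtain ⟨x, hx⟩ := h2.nonempty
  exact ⟨x, hx.1, hx.2⟩

theorem aeval_one_add_C_mul_X {n : ℕ} (B : Matrix (Fin n) (Fin n) ℝ) (t : ℝ) :
    aeval B (1 + C t * X) = 1 + t • B := by
  rw [map_add, _root_.map_one, _root_.map_mul, aeval_C, aeval_X, Algebra.smul_def]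

theorem prodCtrl_eq_aeval {n : ℕ} (B : Matrix (Fin n) (Fin n) ℝ) (u : ℕ → ℝ) :
    ∀ l : ℕ, prodCtrl B l u = aeval B (∏ k ∈ Finset.range l, (1 + C (u k) * X))
  | 0 => by simp [prodCtrl]
  | l + 1 => by
    have hstep : prodCtrl B (l + 1) u = (1 + u l • B) * prodCtrl B l u := by
      rw [prodCtrl, prodCtrl, List.range_succ, List.reverse_append]
      simp
    rw [hstep, prodCtrl_eq_aeval B u l, Finset.prod_range_succ, mul_comm
      (∏ k ∈ Finset.range l, (1 + C (u k) * X)), _root_.map_mul, aeval_one_add_C_mul_X]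

set_option maxHeartbeats 1600000 in
/-- if moreover `B` is cyclic, then `2m+3` nonzero, pairwise distinct real
numbers `u(0), …, u(2m+2)` exist with `(I + u(2m+2)B)⋯(I + u(0)B) = I`, where `m` is the
number of distinct eigenvalues of `B`. -/
theorem stmt1 {n : ℕ} (hn : 1 ≤ n) (B : Matrix (Fin n) (Fin n) ℝ)
    (hsplit : B.charpoly.Splits) (hdet : B.det ≠ 0)
    (hcyc : minpoly ℝ B = B.charpoly)
    (hmult : ∀ μ : ℝ, (minpoly ℝ B).rootMultiplicity μ ≤ 2)
    (m : ℕ) (hm : m = B.charpoly.roots.toFinset.card) :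
    ∃ u : ℕ → ℝ, (∀ k ≤ 2 * m + 2, u k ≠ 0) ∧
      (∀ k ≤ 2 * m + 2, ∀ l ≤ 2 * m + 2, k ≠ l → u k ≠ u l) ∧
      prodCtrl B (2 * m + 3) u = 1 := by
  classical
  set χ := B.charpoly with hχ
  have hmonic : χ.Monic := B.charpoly_monic
  have hχ0 : χ ≠ 0 := hmonic.ne_zero
  have hdeg : χ.natDegree = n := B.charpoly_natDegree_eq_dim.trans (by simp)
  set T := χ.roots.toFinset with hT
  have hTmem : ∀ x : ℝ, x ∈ T ↔ χ.IsRoot x := by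
    intro x
    rw [hT, Multiset.mem_toFinset, mem_roots hχ0]
  have hT0 : ∀ x ∈ T, x ≠ 0 := by
    intro x hx hx0
    apply hdet
    rw [Matrix.det_eq_sign_charpoly_coeff, Polynomial.coeff_zero_eq_eval_zero]
    have h := (hTmem x).mp hx
    rw [IsRoot, hx0] at h
    rw [← hχ, h, mul_zero]
  set q : ℝ[X] := ∏ x ∈ T, (X - C x) with hq
  have hqmonic : q.Monic := monic_prod_of_monic _ _ fun x _ => monic_X_sub_C x
  have hqdeg : q.natDegree = m := by
    rw [hq, natDegree_prod _ _ fun x _ => X_sub_C_ne_zero x]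
    simp [natDegree_X_sub_C, hm]
  have hcount : χ.roots ≤ T.val + T.val := by
    rw [Multiset.le_iff_count]
    intro x
    rw [Multiset.count_add]
    by_cases hx : x ∈ χ.roots
    · have h1 : Multiset.count x T.val = 1 :=
        Multiset.count_eq_one_of_mem T.nodup (Multiset.mem_toFinset.mpr hx)
      have h2 : Multiset.count x χ.roots = χ.rootMultiplicity x := count_roots χ
      rw [h1, h2]
      have := hmult x
      rw [hcyc] at this
      omega
    · rw [Multiset.count_eq_zero_of_notMem hx]
      omega
  have hdvd : χ ∣ q ^ 2 := by
    have hchi : χ = (χ.roots.map fun a => X - C a).prod :=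
      hsplit.eq_prod_roots_of_monic hmonic
    have hq2 : q ^ 2 = ((T.val + T.val).map fun a => X - C a).prod := by
      rw [Multiset.map_add, Multiset.prod_add, sq, hq, Finset.prod_eq_multiset_prod]
    rw [hchi, hq2]
    exact Multiset.prod_dvd_prod_of_le (Multiset.map_le_map hcount)
  have hTne : T.Nonempty := by
    have hcard : χ.roots.card = n := by
      rw [← hdeg]; exact splits_iff_card_roots.mp hsplit
    have hne : χ.roots ≠ 0 := by
      intro h; rw [h] at hcard; simp at hcard; omega
    obtain ⟨x, hx⟩ := Multiset.exists_mem_of_ne_zero hne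
    exact ⟨x, Multiset.mem_toFinset.mpr hx⟩
  -- the positive and negative eigenvalues
  set Tpos := T.filter (fun x => 0 < x) with hTpos
  set Tneg := T.filter (fun x => x < 0) with hTneg
  have hcards : Tneg.card + Tpos.card = m := by
    have h1 := Finset.card_filter_add_card_filter_not (s := T) (p := fun x => x < 0)
    have h2 : T.filter (fun x => ¬ x < 0) = Tpos := by
      apply Finset.filter_congr
      intro x hx
      have := hT0 x hx
      constructor
      · intro h; simp only [not_lt] at h; exact lt_of_le_of_ne h (Ne.symm this)
      · intro h; simp only [not_lt]; exact le_of_lt h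
    rw [h2] at h1
    rw [← hm] at h1
    exact h1
  -- the auxiliary points a < b
  set a : ℝ := if h : Tpos.Nonempty then Tpos.min' h / 2 else 1 with ha
  have ha0 : 0 < a := by
    rw [ha]
    split
    · rename_i h
      have := (Finset.mem_filter.mp (Tpos.min'_mem h)).2
      linarith
    · norm_num
  have haT : ∀ x ∈ Tpos, a < x := by
    intro x hx
    rw [ha, dif_pos ⟨x, hx⟩]
    have h1 := Finset.min'_le Tpos x hx
    have h2 := (Finset.mem_filter.mp (Tpos.min'_mem ⟨x, hx⟩)).2
    linarith
  set b : ℝ := max a (T.max' hTne) + 1 with hb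
  have hab : a < b := by
    rw [hb]; have := le_max_left a (T.max' hTne); linarith
  have hbT : ∀ x ∈ T, x < b := by
    intro x hx
    have h1 := Finset.le_max' T x hx
    have h2 := le_max_right a (T.max' hTne)
    rw [hb]; linarith
  -- the polynomial 𝒬 and its sign behavior
  set Q : ℝ[X] := X * (X - C a) * (X - C b) * q ^ 2 with hQ
  set H : ℝ → ℝ := fun x => Q.eval x with hH
  have hHval : ∀ x : ℝ, H x = x * (x - a) * (x - b) * (q.eval x) ^ 2 := by
    intro x; rw [hH, hQ]; simp
  have hqzero : ∀ x : ℝ, q.eval x = 0 ↔ x ∈ T := by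
    intro x
    rw [hq, eval_prod, Finset.prod_eq_zero_iff]
    constructor
    · rintro ⟨t, ht, h⟩
      simp only [eval_sub, eval_X, eval_C, sub_eq_zero] at h
      rwa [h]
    · intro hx
      exact ⟨x, hx, by simp⟩
  have hQmonic : Q.Monic := ((monic_X.mul (monic_X_sub_C a)).mul (monic_X_sub_C b)).mul
    (hqmonic.pow 2)
  have hQne : Q ≠ 0 := hQmonic.ne_zero
  have hq_of_H : ∀ x : ℝ, H x ≠ 0 → q.eval x ≠ 0 := by
    intro x hx h
    apply hx
    rw [hHval, h]
    ring
  have hsq : ∀ x : ℝ, q.eval x ≠ 0 → 0 < (q.eval x) ^ 2 :=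
    fun x hx => pow_two_pos_of_ne_zero hx
  have hneg1 : ∀ x : ℝ, x < 0 → q.eval x ≠ 0 → H x < 0 := by
    intro x hx hq'
    rw [hHval]
    have h1 : 0 < x * (x - a) := mul_pos_of_neg_of_neg hx (by linarith)
    have h2 : x * (x - a) * (x - b) < 0 := mul_neg_of_pos_of_neg h1 (by linarith [hab, ha0])
    exact mul_neg_of_neg_of_pos h2 (hsq x hq')
  have hneg2 : ∀ x : ℝ, a < x → x < b → q.eval x ≠ 0 → H x < 0 := by
    intro x hx1 hx2 hq'
    rw [hHval]
    have h1 : 0 < x * (x - a) := mul_pos (by linarith) (by linarith)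
    have h2 : x * (x - a) * (x - b) < 0 := mul_neg_of_pos_of_neg h1 (by linarith)
    exact mul_neg_of_neg_of_pos h2 (hsq x hq')
  have hpos1 : ∀ x : ℝ, 0 < x → x < a → q.eval x ≠ 0 → 0 < H x := by
    intro x hx1 hx2 hq'
    rw [hHval]
    have h1 : x * (x - a) < 0 := mul_neg_of_pos_of_neg hx1 (by linarith)
    have h2 : 0 < x * (x - a) * (x - b) := mul_pos_of_neg_of_neg h1 (by linarith)
    exact mul_pos h2 (hsq x hq')
  have hpos2 : ∀ x : ℝ, b < x → q.eval x ≠ 0 → 0 < H x := by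
    intro x hx hq'
    rw [hHval]
    have h1 : 0 < x * (x - a) := mul_pos (by linarith [ha0, hab]) (by linarith [hab])
    have h2 : 0 < x * (x - a) * (x - b) := mul_pos h1 (by linarith)
    exact mul_pos h2 (hsq x hq')
  have hzeroT : ∀ x ∈ T, H x = 0 := by
    intro x hx
    rw [hHval, (hqzero x).mpr hx]
    ring
  -- negative-part chain
  set lo₀ : ℝ := min (T.min' hTne - 1) (-1) with hlo₀
  have hlo₀0 : lo₀ < 0 := lt_of_le_of_lt (min_le_right _ _) (by norm_num)
  obtain ⟨xN, psN, hxN_mem, hxN_neg, hlenN, hapN⟩ := pts (H := H) (hi := (0:ℝ))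
    Tneg.card Tneg lo₀ rfl hlo₀0
    (by
      intro α β hα hαβ hβ
      obtain ⟨x, hx, hx'⟩ := exists_nonroot_Ioo hQne hαβ
      refine ⟨x, hx, ?_⟩
      have hxneg : x < 0 := lt_of_lt_of_le hx.2 hβ
      exact hneg1 x hxneg (hq_of_H x hx'))
    (by
      intro s hs
      have h1 := Finset.mem_filter.mp hs
      refine ⟨?_, h1.2⟩
      have := Finset.min'_le T s h1.1
      have := min_le_left (T.min' hTne - 1) (-1 : ℝ)
      rw [hlo₀]
      linarith [min_le_left (T.min' hTne - 1) (-1 : ℝ), Finset.min'_le T s h1.1])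
    (fun s hs => le_of_eq (hzeroT s (Finset.mem_filter.mp hs).1).symm)
  -- positive-part chain
  obtain ⟨xP, psP, hxP_mem, hxP_neg, hlenP, hapP⟩ := pts (H := H) (hi := b)
    Tpos.card Tpos a rfl hab
    (by
      intro α β hα hαβ hβ
      obtain ⟨x, hx, hx'⟩ := exists_nonroot_Ioo hQne hαβ
      refine ⟨x, hx, ?_⟩
      exact hneg2 x (lt_of_le_of_lt hα hx.1) (lt_of_lt_of_le hx.2 hβ) (hq_of_H x hx'))
    (fun s hs => ⟨haT s hs, hbT s (Finset.mem_filter.mp hs).1⟩)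
    (fun s hs => le_of_eq (hzeroT s (Finset.mem_filter.mp hs).1).symm)
  -- the two extra plus points
  obtain ⟨p1, hp1, hp1'⟩ := exists_nonroot_Ioo hQne ha0
  have hp1pos : 0 < H p1 := hpos1 p1 hp1.1 hp1.2 (hq_of_H p1 hp1')
  obtain ⟨p2, hp2, hp2'⟩ := exists_nonroot_Ioo hQne (lt_add_one b)
  have hp2pos : 0 < H p2 := hpos2 p2 hp2.1 (hq_of_H p2 hp2')
  -- glue the chains
  set ps : List (ℝ × ℝ) := psN ++ (p1, xP) :: psP with hps
  have hap : altPairs H xN ps p2 := by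
    apply altPairs_append hapN
    refine ⟨hp1.1, hp1.2.trans hxP_mem.1, hp1pos.le, hxP_neg, ?_⟩
    exact altPairs_mono_right hapP hp2.1.le
  have hlen : ps.length = m + 1 := by
    rw [hps, List.length_append, List.length_cons, hlenN, hlenP]
    omega
  -- choose the scaling constant c
  set ys : List ℝ := xN :: ps.map Prod.snd with hys
  set c : ℝ := 1 + (ys.map fun y => (-(H y))⁻¹).foldr max 0 with hc
  have hc0 : 0 < c := by
    rw [hc]
    have := foldr_max_nonneg (ys.map fun y => (-(H y))⁻¹)
    linarith
  have hyneg : ∀ y ∈ ys, H y < 0 := by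
    intro y hy
    rw [hys] at hy
    rcases List.mem_cons.mp hy with rfl | hy
    · exact hxN_neg
    · obtain ⟨p, hp, rfl⟩ := List.mem_map.mp hy
      exact altPairs_snd_neg hap p hp
  have hPneg : ∀ y ∈ ys, 1 + c * H y < 0 := by
    intro y hy
    have h1 : H y < 0 := hyneg y hy
    have h2 : (-(H y))⁻¹ ≤ (ys.map fun y => (-(H y))⁻¹).foldr max 0 :=
      le_foldr_max _ _ (List.mem_map.mpr ⟨y, hy, rfl⟩)
    have h3 : (-(H y))⁻¹ < c := by rw [hc]; linarith
    have h4 : 0 < -(H y) := by linarith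
    have h5 : (-(H y))⁻¹ * (-(H y)) < c * (-(H y)) :=
      mul_lt_mul_of_pos_right h3 h4
    rw [inv_mul_cancel₀ (ne_of_gt h4)] at h5
    nlinarith
  -- the polynomial P
  set P : ℝ[X] := 1 + C c * Q with hP
  have hPeval : ∀ x : ℝ, P.eval x = 1 + c * H x := by
    intro x; rw [hP, hH]; simp
  have hPcont : Continuous fun x : ℝ => P.eval x := P.continuous
  have hQdeg : Q.natDegree = 2 * m + 3 := by
    rw [hQ, Monic.natDegree_mul ((monic_X.mul (monic_X_sub_C a)).mul (monic_X_sub_C b))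
      (hqmonic.pow 2), Monic.natDegree_mul (monic_X.mul (monic_X_sub_C a)) (monic_X_sub_C b),
      Monic.natDegree_mul monic_X (monic_X_sub_C a), hqmonic.natDegree_pow]
    rw [natDegree_X, natDegree_X_sub_C, natDegree_X_sub_C, hqdeg]
    ring
  have hPdeg : P.natDegree = 2 * m + 3 := by
    rw [hP]
    rw [natDegree_add_eq_right_of_natDegree_lt]
    · rw [natDegree_C_mul (ne_of_gt hc0), hQdeg]
    · rw [natDegree_C_mul (ne_of_gt hc0), hQdeg, natDegree_one]
      omega
  have hPzero : P.eval 0 = 1 := by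
    rw [hP, hQ]
    simp
  have hPne : P ≠ 0 := fun h => by rw [h] at hPzero; simp at hPzero
  -- find 2m+3 distinct real roots of P
  obtain ⟨R, hR, hRcard⟩ := ext_roots (H := H) hPcont ps xN p2 hap
    (by rw [hPeval]; exact hPneg xN (by rw [hys]; exact List.mem_cons_self))
    (by rw [hPeval]; nlinarith [mul_pos hc0 hp2pos])
    (by
      intro p hp
      refine ⟨?_, ?_⟩
      · rw [hPeval]
        have h := altPairs_fst_nonneg hap p hp
        nlinarith
      · rw [hPeval]
        apply hPneg
        rw [hys]
        exact List.mem_cons_of_mem _ (List.mem_map.mpr ⟨p, hp, rfl⟩))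
  rw [hlen] at hRcard
  have hRcard' : R.card = 2 * m + 3 := by omega
  -- R.val is exactly the multiset of roots of P
  have hRle : R.val ≤ P.roots := by
    rw [Multiset.le_iff_count]
    intro x
    by_cases hx : x ∈ R
    · rw [Multiset.count_eq_one_of_mem R.nodup hx, count_roots]
      have := (rootMultiplicity_pos hPne).mpr (hR x hx).2
      omega
    · rw [Multiset.count_eq_zero_of_notMem (fun h => hx h)]
      omega
  have hroots_eq : P.roots = R.val := by
    refine (Multiset.eq_of_le_of_card_le hRle ?_).symm
    have h1 := P.card_roots'
    rw [hPdeg] at h1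
    have h2 : Multiset.card R.val = R.card := rfl
    omega
  have hroots_card : Multiset.card P.roots = P.natDegree := by
    rw [hroots_eq, hPdeg]
    exact hRcard'
  have hPsplits : P.Splits := splits_iff_card_roots.mpr hroots_card
  have hPfact : P = C P.leadingCoeff * (P.roots.map fun r => X - C r).prod :=
    hPsplits.eq_prod_roots
  have hPfact' : P = C P.leadingCoeff * ∏ x ∈ R, (X - C x) := by
    rw [Finset.prod_eq_multiset_prod, ← hroots_eq]
    exact hPfact
  have hR0 : ∀ x ∈ R, x ≠ 0 := by
    intro x hx hx0
    have := (hR x hx).2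
    rw [hx0, hPzero] at this
    norm_num at this
  -- leading coefficient from eval at 0
  have hlead : C P.leadingCoeff = C (∏ x ∈ R, (-x⁻¹)) := by
    have h1 : (1 : ℝ) = P.leadingCoeff * ∏ x ∈ R, (0 - x) := by
      have h0 := congrArg (fun p : ℝ[X] => p.eval 0) hPfact'
      simp only [eval_mul, eval_C, eval_prod, eval_sub, eval_X] at h0
      rw [hPzero] at h0
      exact h0
    have h2 : ∏ x ∈ R, ((0:ℝ) - x) = ∏ x ∈ R, (-x) := by
      apply Finset.prod_congr rfl; intro x _; ring
    rw [h2] at h1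
    have h3 : ∏ x ∈ R, (-x : ℝ) ≠ 0 := by
      intro h
      rw [h, mul_zero] at h1
      norm_num at h1
    have h4 : P.leadingCoeff = (∏ x ∈ R, (-x : ℝ))⁻¹ :=
      eq_inv_of_mul_eq_one_left h1.symm
    rw [h4]
    congr 1
    rw [← Finset.prod_inv_distrib]
    apply Finset.prod_congr rfl
    intro x _
    rw [inv_neg]
  -- define u
  have hEcard : R.card = 2 * m + 3 := hRcard'
  set e : {x // x ∈ R} ≃ Fin (2 * m + 3) := Finset.equivFinOfCardEq hEcard with he
  set ρ : Fin (2 * m + 3) → ℝ := fun i => ((e.symm i : {x // x ∈ R}) : ℝ) with hρ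
  have hρmem : ∀ i, ρ i ∈ R := fun i => (e.symm i).2
  have hρinj : Function.Injective ρ := by
    intro i j hij
    have := Subtype.coe_injective (a₁ := e.symm i) (a₂ := e.symm j) hij
    exact e.symm.injective this
  set u : ℕ → ℝ := fun k => if h : k < 2 * m + 3 then -(ρ ⟨k, h⟩)⁻¹ else 1 with hu
  refine ⟨u, ?_, ?_, ?_⟩
  · intro k hk
    rw [hu]
    simp only
    rw [dif_pos (by omega : k < 2 * m + 3)]
    have := hR0 _ (hρmem ⟨k, by omega⟩)
    simp [this]
  · intro k hk l hl hkl huv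
    rw [hu] at huv
    simp only at huv
    rw [dif_pos (by omega : k < 2 * m + 3), dif_pos (by omega : l < 2 * m + 3)] at huv
    have h1 : (ρ ⟨k, by omega⟩)⁻¹ = (ρ ⟨l, by omega⟩)⁻¹ := by linarith [huv]
    have h2 := inv_injective h1
    have h3 := hρinj h2
    exact hkl (by injection h3)
  · rw [prodCtrl_eq_aeval]
    have hprod : (∏ k ∈ Finset.range (2 * m + 3), (1 + C (u k) * X)) = P := by
      rw [Finset.prod_range fun k => 1 + C (u k) * X]
      have hstep1 : ∀ i : Fin (2 * m + 3), (1 + C (u (i : ℕ)) * X) = 1 + C (-(ρ i)⁻¹) * X := by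
        intro i
        rw [hu]
        simp only
        rw [dif_pos i.isLt]
      rw [Fintype.prod_congr _ _ hstep1]
      have hstep2 : ∏ i : Fin (2 * m + 3), (1 + C (-(ρ i)⁻¹) * X)
          = ∏ x ∈ R, (1 + C (-(x : ℝ)⁻¹) * X) := by
        rw [← Finset.prod_coe_sort R fun x => 1 + C (-(x : ℝ)⁻¹) * X]
        exact Equiv.prod_comp e.symm fun x : {x // x ∈ R} => 1 + C (-(x : ℝ)⁻¹) * X
      rw [hstep2]
      have hstep3 : ∀ x ∈ R, (1 + C (-(x:ℝ)⁻¹) * X) = C (-(x:ℝ)⁻¹) * (X - C x) := by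
        intro x hx
        have hx0 : x ≠ 0 := hR0 x hx
        have hxx : (-x⁻¹ : ℝ) * x = -1 := by
          rw [neg_mul, inv_mul_cancel₀ hx0]
        rw [mul_sub, ← C_mul, hxx]
        have hC1 : C (-1 : ℝ) = -1 := by
          rw [← C_1, ← C_neg]
        rw [hC1]
        ring
      rw [Finset.prod_congr rfl hstep3, Finset.prod_mul_distrib]
      have hmp : (∏ x ∈ R, C (-x⁻¹ : ℝ)) = C (∏ x ∈ R, (-x⁻¹ : ℝ)) :=
        (map_prod C (fun x : ℝ => -x⁻¹) R).symm
      rw [hmp, ← hlead, ← hPfact']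
    rw [hprod, hP, map_add, _root_.map_one, _root_.map_mul, aeval_C]
    obtain ⟨w, hw⟩ := hdvd
    have hchiB : aeval B χ = 0 := by
      rw [hχ]
      exact Matrix.aeval_self_charpoly B
    have hQB : aeval B Q = 0 := by
      rw [hQ, hw]
      simp only [_root_.map_mul]
      rw [hchiB, zero_mul, mul_zero]
    rw [hQB, mul_zero, add_zero]
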